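/- Let z_1 < z_2 < z_3 < z_4 < z_5 be real numbers satisfying (z_1 − z_2)(z_3 − z_4) = (z_2 − z_3)(z_4 − z_5), and let r_1 > 0 be arbitrary. Define recursively r_{k+1} = (z_{k+1} − z_k)² / (4 r_k) for k = 1,…,4. Then r_5 = r_1, and for each k = 1,…,4 the circles with centers (z_k, r_k) and (z_{k+1}, r_{k+1}) and radii r_k and r_{k+1} are externally tangent (distance of centers equals r_k + r_{k+1}); each of these circles is tangent to the real axis at (z_k, 0). -/

import Mathlib

open Complex in
lemma flower_tangent_aux (a b p q : ℝ) (hp : 0 < p) (hq : 0 < q)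
    (h : (b - a) ^ 2 = 4 * p * q) :
    dist ((a : ℂ) + p * I) ((b : ℂ) + q * I) = p + q := by
  rw [Complex.dist_eq]
  have e : ((a : ℂ) + p * I) - ((b : ℂ) + q * I) = ((a - b : ℝ) : ℂ) + ((p - q : ℝ) : ℂ) * I := by
    push_cast; ring
  rw [e, Complex.norm_add_mul_I]
  have : (a - b) ^ 2 + (p - q) ^ 2 = (p + q) ^ 2 := by nlinarith [h]
  rw [this, Real.sqrt_sq (by positivity)]

open Complex in
lemma flower_axis_aux (a r : ℝ) (hr : 0 < r) :
    dist ((a : ℂ) + r * I) (a : ℂ) = r := by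
  rw [Complex.dist_eq]
  have e : ((a : ℂ) + r * I) - a = ((r : ℝ) : ℂ) * I := by push_cast; ring
  rw [e, norm_mul, Complex.norm_I, Complex.norm_real, mul_one, Real.norm_eq_abs, abs_of_pos hr]

open Complex in
/-- Construction of the one-parameter family of flowers: given ordered real points
with multi-ratio `-1` (sixth point at infinity) and an arbitrary first radius,
the recursively defined radii close up (`r₅ = r₁`), consecutive circles with
centers `(z_k, r_k)` are externally tangent, and each circle is tangent to the
real axis at `(z_k, 0)`. -/
theorem flower_family_construction
    (z₁ z₂ z₃ z₄ z₅ : ℝ) (h12 : z₁ < z₂) (h23 : z₂ < z₃) (h34 : z₃ < z₄)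
    (h45 : z₄ < z₅)
    (hm : (z₁ - z₂) * (z₃ - z₄) = (z₂ - z₃) * (z₄ - z₅))
    (r₁ : ℝ) (hr₁ : 0 < r₁) (r₂ r₃ r₄ r₅ : ℝ)
    (hr₂ : r₂ = (z₂ - z₁) ^ 2 / (4 * r₁))
    (hr₃ : r₃ = (z₃ - z₂) ^ 2 / (4 * r₂))
    (hr₄ : r₄ = (z₄ - z₃) ^ 2 / (4 * r₃))
    (hr₅ : r₅ = (z₅ - z₄) ^ 2 / (4 * r₄)) :
    r₅ = r₁ ∧
    dist ((z₁ : ℂ) + r₁ * I) ((z₂ : ℂ) + r₂ * I) = r₁ + r₂ ∧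
    dist ((z₂ : ℂ) + r₂ * I) ((z₃ : ℂ) + r₃ * I) = r₂ + r₃ ∧
    dist ((z₃ : ℂ) + r₃ * I) ((z₄ : ℂ) + r₄ * I) = r₃ + r₄ ∧
    dist ((z₄ : ℂ) + r₄ * I) ((z₅ : ℂ) + r₅ * I) = r₄ + r₅ ∧
    dist ((z₁ : ℂ) + r₁ * I) (z₁ : ℂ) = r₁ ∧
    dist ((z₂ : ℂ) + r₂ * I) (z₂ : ℂ) = r₂ ∧
    dist ((z₃ : ℂ) + r₃ * I) (z₃ : ℂ) = r₃ ∧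
    dist ((z₄ : ℂ) + r₄ * I) (z₄ : ℂ) = r₄ ∧
    dist ((z₅ : ℂ) + r₅ * I) (z₅ : ℂ) = r₅ := by
  have p12 : (0:ℝ) < z₂ - z₁ := by linarith
  have p23 : (0:ℝ) < z₃ - z₂ := by linarith
  have p34 : (0:ℝ) < z₄ - z₃ := by linarith
  have p45 : (0:ℝ) < z₅ - z₄ := by linarith
  have hr2 : 0 < r₂ := by rw [hr₂]; positivity
  have hr3 : 0 < r₃ := by rw [hr₃]; positivity
  have hr4 : 0 < r₄ := by rw [hr₄]; positivity
  have hr5 : 0 < r₅ := by rw [hr₅]; positivity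
  have e2 : (z₂ - z₁) ^ 2 = 4 * r₁ * r₂ := by rw [hr₂]; field_simp
  have e3 : (z₃ - z₂) ^ 2 = 4 * r₂ * r₃ := by rw [hr₃]; field_simp
  have e4 : (z₄ - z₃) ^ 2 = 4 * r₃ * r₄ := by rw [hr₄]; field_simp
  have e5 : (z₅ - z₄) ^ 2 = 4 * r₄ * r₅ := by rw [hr₅]; field_simp
  have key : r₅ = r₁ := by
    have hcross : (z₂ - z₁) * (z₄ - z₃) = (z₃ - z₂) * (z₅ - z₄) := by nlinarith [hm]
    have : (4 * r₁ * r₂) * (4 * r₃ * r₄) = (4 * r₂ * r₃) * (4 * r₄ * r₅) := by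
      have hsq : ((z₂ - z₁) * (z₄ - z₃)) ^ 2 = ((z₃ - z₂) * (z₅ - z₄)) ^ 2 := by rw [hcross]
      rw [← e2, ← e3, ← e4, ← e5]; linear_combination hsq
    have h' : r₁ * (16 * r₂ * r₃ * r₄) = r₅ * (16 * r₂ * r₃ * r₄) := by nlinarith [this]
    have hne : (16 * r₂ * r₃ * r₄) ≠ 0 := by positivity
    exact (mul_right_cancel₀ hne h').symm
  exact ⟨key,
    flower_tangent_aux _ _ _ _ hr₁ hr2 e2,
    flower_tangent_aux _ _ _ _ hr2 hr3 e3,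
    flower_tangent_aux _ _ _ _ hr3 hr4 e4,
    flower_tangent_aux _ _ _ _ hr4 hr5 e5,
    flower_axis_aux _ _ hr₁,
    flower_axis_aux _ _ hr2,
    flower_axis_aux _ _ hr3,
    flower_axis_aux _ _ hr4,
    flower_axis_aux _ _ hr5⟩
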